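/- Let Ξ be a linear Hermiticity-preserving map, and suppose (O_{EB,1} ⊗ ... ⊗ Id_m ⊗ ... ⊗ O_{EB,k}) applied after Ξ to ρ_in yields a positive operator whenever Ξ[ρ_in] becomes positive after projection onto the right-singular vectors ψ_n of the rank-one Kraus operators A_n ∝ |φ_n⟩⟨ψ_n| of the EB operations. Then the output ((O_{EB,1} ⊗ ... ⊗ Id_m ⊗ ... ⊗ O_{EB,k}) ∘ Ξ)[ρ_in] is separable with respect to the partition P_j^k. -/
import Mathlib


open Matrix BigOperators ComplexOrder

noncomputable section

/-- Index set of the full multipartite Hilbert space: party `i` has dimension `d i`. -/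
abbrev fullIdx {N : ℕ} (d : Fin N → ℕ) := (i : Fin N) → Fin (d i)

/-- Index set of the Hilbert space of block `t` of the partition given by the
coloring `c : Fin N → Fin k`. -/
abbrev blockIdx {N : ℕ} (d : Fin N → ℕ) {k : ℕ} (c : Fin N → Fin k) (t : Fin k) :=
  (i : {i : Fin N // c i = t}) → Fin (d i.1)

/-- Tensor product, across the partition encoded by the coloring `c`, of operators
`M t` on the blocks. -/
def prodAcross {N : ℕ} (d : Fin N → ℕ) {k : ℕ} (c : Fin N → Fin k)
    (M : (t : Fin k) → Matrix (blockIdx d c t) (blockIdx d c t) ℂ) :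
    Matrix (fullIdx d) (fullIdx d) ℂ :=
  fun x y => ∏ t, M t (fun i => x i.1) (fun i => y i.1)

/-- A density operator: positive semidefinite with unit trace. -/
def IsState {n : Type*} [Fintype n] (ρ : Matrix n n ℂ) : Prop :=
  ρ.PosSemidef ∧ ρ.trace = 1

/-- `ρ` is separable with respect to the partition encoded by `c`: it is a convex
combination of tensor products of states on the blocks. -/
def SepWrt {N : ℕ} (d : Fin N → ℕ) {k : ℕ} (c : Fin N → Fin k)
    (ρ : Matrix (fullIdx d) (fullIdx d) ℂ) : Prop :=
  ∃ (m : ℕ) (p : Fin m → ℝ)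
    (F : Fin m → (t : Fin k) → Matrix (blockIdx d c t) (blockIdx d c t) ℂ),
    (∀ j, 0 ≤ p j) ∧ (∑ j, p j = 1) ∧ (∀ j t, IsState (F j t)) ∧
    ρ = ∑ j, (p j : ℂ) • prodAcross d c (F j)

/-- `ρ` is `k`-separable: a convex combination of states each separable with respect
to some partition of the parties into exactly `k` blocks. -/
def KSep {N : ℕ} (d : Fin N → ℕ) (k : ℕ)
    (ρ : Matrix (fullIdx d) (fullIdx d) ℂ) : Prop :=
  ∃ (m : ℕ) (p : Fin m → ℝ) (c : Fin m → Fin N → Fin k)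
    (σ : Fin m → Matrix (fullIdx d) (fullIdx d) ℂ),
    (∀ j, 0 ≤ p j) ∧ (∑ j, p j = 1) ∧
    (∀ j, Function.Surjective (c j)) ∧ (∀ j, SepWrt d (c j) (σ j)) ∧
    ρ = ∑ j, (p j : ℂ) • σ j

/-- `R_ent[ρ] ≤ r`: `ρ` is a convex combination of partition-separable states where
every block of every partition used contains at most `r` parties. -/
def REntLe {N : ℕ} (d : Fin N → ℕ) (r : ℕ)
    (ρ : Matrix (fullIdx d) (fullIdx d) ℂ) : Prop :=
  ∃ (m : ℕ) (p : Fin m → ℝ) (c : Fin m → Fin N → Fin N)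
    (σ : Fin m → Matrix (fullIdx d) (fullIdx d) ℂ),
    (∀ j, 0 ≤ p j) ∧ (∑ j, p j = 1) ∧
    (∀ j t, (Finset.univ.filter (fun i => c j i = t)).card ≤ r) ∧
    (∀ j, SepWrt d (c j) (σ j)) ∧
    ρ = ∑ j, (p j : ℂ) • σ j



lemma prod_ite_one {k : ℕ} (m₀ : Fin k) (h : Fin k → ℂ) :
    (∏ t, if t = m₀ then 1 else h t) = ∏ t ∈ Finset.univ.erase m₀, h t := by
  rw [← Finset.mul_prod_erase _ _ (Finset.mem_univ m₀), if_pos rfl, one_mul]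
  exact Finset.prod_congr rfl fun t ht => if_neg (Finset.ne_of_mem_erase ht)

lemma prod_ite_mul {k : ℕ} (m₀ : Fin k) (f g : Fin k → ℂ) :
    (∏ t, if t = m₀ then 1 else f t * g t) =
      (∏ t ∈ Finset.univ.erase m₀, f t) * (∏ t ∈ Finset.univ.erase m₀, g t) := by
  have h : ∀ t, (if t = m₀ then (1:ℂ) else f t * g t)
      = (if t = m₀ then 1 else f t) * (if t = m₀ then 1 else g t) := by
    intro t; split_ifs <;> ring
  simp_rw [h, Finset.prod_mul_distrib, prod_ite_one]

lemma posSemidef_outer {ι : Type*} [Fintype ι] [DecidableEq ι] (v : ι → ℂ) :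
    (Matrix.of fun u w => v u * (starRingEnd ℂ) (v w)).PosSemidef := by
  have h : (Matrix.of fun u w => v u * (starRingEnd ℂ) (v w))
      = (Matrix.replicateRow Unit (star v))ᴴ * Matrix.replicateRow Unit (star v) := by
    ext u w
    simp [Matrix.mul_apply, Matrix.replicateRow_apply, Matrix.conjTranspose_apply, mul_comm]
  rw [h]
  exact Matrix.posSemidef_conjTranspose_mul_self _

lemma ite_and_mul {p q : Prop} [Decidable p] [Decidable q] (z : ℂ) :
    (if p ∧ q then z else 0) = (if p then 1 else 0) * (if q then 1 else 0) * z := by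
  by_cases hp : p <;> by_cases hq : q <;> simp [hp, hq]

/-- Restriction of a full multi-index to the block `t` of the partition `c`. -/
def res {N : ℕ} (d : Fin N → ℕ) {k : ℕ} (c : Fin N → Fin k) (x : fullIdx d)
    (t : Fin k) : blockIdx d c t :=
  fun i => x i.1

/-- `X` lies in the cone of operators separable with respect to the partition `c`:
a nonnegative combination of tensor products of positive semidefinite operators on
the blocks. -/
def InSepCone {N : ℕ} (d : Fin N → ℕ) {k : ℕ} (c : Fin N → Fin k)
    (X : Matrix (fullIdx d) (fullIdx d) ℂ) : Prop :=
  ∃ (m : ℕ) (p : Fin m → ℝ)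
    (F : Fin m → (t : Fin k) → Matrix (blockIdx d c t) (blockIdx d c t) ℂ),
    (∀ j, 0 ≤ p j) ∧ (∀ j t, (F j t).PosSemidef) ∧
    X = ∑ j, (p j : ℂ) • prodAcross d c (F j)

/-- Let `Ξ` be a linear Hermiticity-preserving map on an `N`-partite system, let
`c` encode a partition `P_j^k` into `k` blocks with distinguished block `m₀`, and on
each block `t ≠ m₀` apply an entanglement-breaking operation with rank-one Kraus
operators `A_n ∝ |φ_{t,n}⟩⟨ψ_{t,n}|` (the identity acting on block `m₀`).  If for
every choice of indices `n` the partial inner product of `Ξ[ρ_in]` with the vectors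
`⊗_{t≠m₀} ψ_{t,n t}` (leaving block `m₀` untouched) is positive semidefinite, then
the output `((O_EB,1 ⊗ ... ⊗ Id_{m₀} ⊗ ... ⊗ O_EB,k) ∘ Ξ)[ρ_in]` is separable with
respect to the partition. -/
theorem dissociation_via_eb_concatenation {N : ℕ} (d : Fin N → ℕ) {k : ℕ}
    (c : Fin N → Fin k) (m₀ : Fin k) (r : Fin k → ℕ)
    (φ ψ : (t : Fin k) → Fin (r t) → (blockIdx d c t → ℂ))
    (Ξ : Matrix (fullIdx d) (fullIdx d) ℂ →ₗ[ℂ] Matrix (fullIdx d) (fullIdx d) ℂ)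
    (hherm : ∀ A : Matrix (fullIdx d) (fullIdx d) ℂ, A.IsHermitian → (Ξ A).IsHermitian)
    (ρin : Matrix (fullIdx d) (fullIdx d) ℂ) (hρ : IsState ρin)
    -- the combined Kraus operators `(⊗_{t≠m₀} |φ_{t,n t}⟩⟨ψ_{t,n t}|) ⊗ I_{m₀}`
    (K : ((t : Fin k) → Fin (r t)) → Matrix (fullIdx d) (fullIdx d) ℂ)
    (hK : ∀ n x y, K n x y =
      (if res d c x m₀ = res d c y m₀ then 1 else 0) *
        ∏ t, if t = m₀ then 1 else
          φ t (n t) (res d c x t) * (starRingEnd ℂ) (ψ t (n t) (res d c y t)))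
    -- positivity of the partial inner products of `Ξ[ρ_in]` on block `m₀`
    (hpos : ∀ n : (t : Fin k) → Fin (r t),
      (Matrix.of (fun u v : blockIdx d c m₀ => ∑ x, ∑ y,
        if res d c x m₀ = u ∧ res d c y m₀ = v then
          (∏ t, if t = m₀ then 1 else
            (starRingEnd ℂ) (ψ t (n t) (res d c x t)) * ψ t (n t) (res d c y t)) *
            (Ξ ρin) x y
        else 0)).PosSemidef) :
    InSepCone d c (∑ n : (t : Fin k) → Fin (r t), K n * (Ξ ρin) * (K n)ᴴ) := by
  classical
  set e := (Fintype.equivFin ((t : Fin k) → Fin (r t))) with he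
  set M : ((t : Fin k) → Fin (r t)) → Matrix (blockIdx d c m₀) (blockIdx d c m₀) ℂ :=
    fun n => Matrix.of (fun u v : blockIdx d c m₀ => ∑ x, ∑ y,
      if res d c x m₀ = u ∧ res d c y m₀ = v then
        (∏ t, if t = m₀ then 1 else
          (starRingEnd ℂ) (ψ t (n t) (res d c x t)) * ψ t (n t) (res d c y t)) *
          (Ξ ρin) x y
      else 0) with hMdef
  set F : ((t : Fin k) → Fin (r t)) → (t : Fin k) →
      Matrix (blockIdx d c t) (blockIdx d c t) ℂ :=
    fun n t => Matrix.of (fun u v => if h : t = m₀ then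
        M n (fun i => u ⟨i.1, i.2.trans h.symm⟩) (fun i => v ⟨i.1, i.2.trans h.symm⟩)
      else φ t (n t) u * (starRingEnd ℂ) (φ t (n t) v)) with hFdef
  refine ⟨Fintype.card ((t : Fin k) → Fin (r t)), fun _ => 1, fun j => F (e.symm j),
    fun _ => zero_le_one, ?_, ?_⟩
  · intro j t
    show (F (e.symm j) t).PosSemidef
    by_cases h : t = m₀
    · subst h
      have hEq : F (e.symm j) t = M (e.symm j) := by
        ext u v
        show (if h : t = t then _ else _) = _
        rw [dif_pos rfl]
      rw [hEq]
      exact hpos _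
    · have hEq : F (e.symm j) t = Matrix.of (fun u v =>
          φ t ((e.symm j) t) u * (starRingEnd ℂ) (φ t ((e.symm j) t) v)) := by
        ext u v
        exact dif_neg h
      rw [hEq]
      exact posSemidef_outer _
  · rw [show (∑ j, (((1:ℝ) : ℂ)) • prodAcross d c (F (e.symm j)))
        = ∑ n, prodAcross d c (F n) by
      simp only [Complex.ofReal_one, one_smul]
      exact Equiv.sum_comp e.symm (fun n => prodAcross d c (F n))]
    refine Finset.sum_congr rfl fun n _ => ?_
    ext x y
    have hRHS : prodAcross d c (F n) x y = M n (res d c x m₀) (res d c y m₀) *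
        ((∏ t ∈ Finset.univ.erase m₀, φ t (n t) (res d c x t)) *
         (∏ t ∈ Finset.univ.erase m₀, (starRingEnd ℂ) (φ t (n t) (res d c y t)))) := by
      show (∏ t, F n t (fun i => x i.1) (fun i => y i.1)) = _
      rw [← Finset.mul_prod_erase Finset.univ _ (Finset.mem_univ m₀)]
      congr 1
      · show (if h : m₀ = m₀ then _ else _) = _
        rw [dif_pos rfl]
        rfl
      · rw [← Finset.prod_mul_distrib]
        refine Finset.prod_congr rfl fun t ht => ?_
        show (if h : t = m₀ then _ else _) = _
        rw [dif_neg (Finset.ne_of_mem_erase ht)]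
        rfl
    have hLHS : (K n * Ξ ρin * (K n)ᴴ) x y
        = ∑ b, ∑ a, K n x a * (Ξ ρin) a b * (starRingEnd ℂ) (K n y b) := by
      simp only [Matrix.mul_apply, Matrix.conjTranspose_apply, Finset.sum_mul]
      rfl
    rw [hLHS, hRHS]
    show _ = (Matrix.of _ : Matrix (blockIdx d c m₀) (blockIdx d c m₀) ℂ) _ _ * _
    rw [Matrix.of_apply, Finset.sum_comm, Finset.sum_mul]
    refine Finset.sum_congr rfl fun a _ => ?_
    rw [Finset.sum_mul]
    refine Finset.sum_congr rfl fun b _ => ?_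
    rw [hK, hK, _root_.map_mul, _root_.map_prod, apply_ite (starRingEnd ℂ), _root_.map_one, _root_.map_zero]
    simp only [apply_ite (starRingEnd ℂ), _root_.map_one, _root_.map_mul, Complex.conj_conj]
    rw [prod_ite_mul, prod_ite_mul, ite_and_mul, prod_ite_mul]
    rw [if_congr (eq_comm (a := res d c a m₀) (b := res d c x m₀)) rfl rfl,
        if_congr (eq_comm (a := res d c b m₀) (b := res d c y m₀)) rfl rfl]
    ring


end
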